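/- Let $F_n$ ($n \ge 1$) and $F$ be closed subsets of $\mathbb{R}^d$, and let $\mathcal{K}_1$ be a family of compact subsets of $\mathbb{R}^d$ such that: (1) $\bigcup_{K \in \mathcal{K}_1} K = \mathbb{R}^d$; (2) for every $\delta > 0$ and every compact $K$, the closure $\overline{K^{\delta}}$ of the $\delta$-swelling of $K$ belongs to $\mathcal{K}_1$; (3) for every $K \in \mathcal{K}_1$, the sets $F_n \cap K$ converge to $F \cap K$ in the sense that (PK1) and (PK2) hold for them. Then (PK1) and (PK2) hold for $F_n$ and $F$, i.e. $F_n \to F$ in the Fell topology. -/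
import Mathlib

open Filter Set Metric

/-- Painlevé–Kuratowski convergence criteria for a sequence of closed sets `A n`
converging to a closed set `Alim`:
(PK1) every point of `Alim` is the limit of points `y n ∈ A n` (for all large `n`);
(PK2) for every subsequence and points `y k ∈ A (φ k)` converging in the space,
the limit belongs to `Alim`. -/
def PKConv {E : Type*} [MetricSpace E] (A : ℕ → Set E) (Alim : Set E) : Prop :=
  (∀ y ∈ Alim, ∃ yseq : ℕ → E,
      (∀ᶠ n in atTop, yseq n ∈ A n) ∧ Tendsto yseq atTop (nhds y)) ∧
  (∀ φ : ℕ → ℕ, StrictMono φ → ∀ (yseq : ℕ → E) (ylim : E),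
      (∀ j, yseq j ∈ A (φ j)) → Tendsto yseq atTop (nhds ylim) → ylim ∈ Alim)

/-- If `K1` is a family of compact subsets of `ℝ^d` covering the whole space,
closed under taking closures of `δ`-swellings of arbitrary compact sets, and if
`F n ∩ K → Flim ∩ K` in the Painlevé–Kuratowski sense for every `K ∈ K1`, then
`F n → Flim` in the Painlevé–Kuratowski sense (i.e. in the Fell topology). -/
theorem PKConv_of_PKConv_inter_compacts {d : ℕ}
    (F : ℕ → Set (EuclideanSpace ℝ (Fin d))) (Flim : Set (EuclideanSpace ℝ (Fin d)))
    (hF : ∀ n, IsClosed (F n)) (hFlim : IsClosed Flim)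
    (K1 : Set (Set (EuclideanSpace ℝ (Fin d))))
    (hK1comp : ∀ K ∈ K1, IsCompact K)
    (hcover : ⋃ K ∈ K1, K = univ)
    (hswell : ∀ δ > (0:ℝ), ∀ K : Set (EuclideanSpace ℝ (Fin d)), IsCompact K →
      closure (Metric.thickening δ K) ∈ K1)
    (hconv : ∀ K ∈ K1, PKConv (fun n => F n ∩ K) (Flim ∩ K)) :
    PKConv F Flim := by
  constructor
  · intro y hy
    have hK : closure (Metric.thickening 1 ({y} : Set _)) ∈ K1 :=
      hswell 1 one_pos {y} isCompact_singleton
    obtain ⟨h1, _⟩ := hconv _ hK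
    have hyK : y ∈ closure (Metric.thickening 1 ({y} : Set _)) :=
      subset_closure (Metric.self_subset_thickening one_pos _ rfl)
    obtain ⟨ys, hmem, hlim⟩ := h1 y ⟨hy, hyK⟩
    exact ⟨ys, hmem.mono fun n h => h.1, hlim⟩
  · intro φ hφ yseq ylim hmem hlim
    have hK : closure (Metric.thickening 1 ({ylim} : Set _)) ∈ K1 :=
      hswell 1 one_pos {ylim} isCompact_singleton
    obtain ⟨_, h2⟩ := hconv _ hK
    have hev : ∀ᶠ j in atTop, yseq j ∈ closure (Metric.thickening 1 ({ylim} : Set _)) := by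
      filter_upwards [hlim (Metric.ball_mem_nhds ylim one_pos)] with j hj
      exact subset_closure (by rwa [Metric.thickening_singleton])
    obtain ⟨N, hN⟩ := eventually_atTop.mp hev
    have hψ : StrictMono (fun j => φ (j + N)) := fun a b h => hφ (by omega)
    have := h2 (fun j => φ (j + N)) hψ (fun j => yseq (j + N)) ylim
      (fun j => ⟨hmem _, hN _ (Nat.le_add_left N j)⟩)
      (hlim.comp (tendsto_add_atTop_nat N))
    exact this.1
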